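/- The series G defined by 1 + G = ∑_{n=0}^∞ ((pq;q)_n/(q²;q)_n)·q^n converges, and with h_0 = q·(1−p)/(1−pq) and M_0 = q·(p;q)_∞/((1−pq)·((pq;q)_∞ − (q;q)_∞)) one has h_0 + (1−h_0)/(1+G) = M_0; equivalently, ∑_{n=0}^∞ ((pq;q)_n/(q²;q)_n)·q^n = (1−h_0)/(M_0 − h_0). -/

import Mathlib

/-- Finite q-shifted factorial `(z;q)_n`. -/
noncomputable def qp (z q : ℝ) (n : ℕ) : ℝ := ∏ k ∈ Finset.range n, (1 - z * q ^ k)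

/-- Infinite q-shifted factorial `(z;q)_∞`. -/
noncomputable def qpInf (z q : ℝ) : ℝ := ∏' k : ℕ, (1 - z * q ^ k)

open Filter Finset Real Topology

lemma factor_pos {z q : ℝ} (hz0 : 0 ≤ z) (hz1 : z < 1) (hq0 : 0 < q) (hq1 : q < 1)
    (k : ℕ) : 0 < 1 - z * q ^ k := by
  have h1 : q ^ k ≤ 1 := pow_le_one₀ hq0.le hq1.le
  nlinarith [pow_pos hq0 k]

lemma qp_pos {z q : ℝ} (hz0 : 0 ≤ z) (hz1 : z < 1) (hq0 : 0 < q) (hq1 : q < 1)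
    (n : ℕ) : 0 < qp z q n :=
  Finset.prod_pos fun k _ => factor_pos hz0 hz1 hq0 hq1 k

lemma hasProd_qp {z q : ℝ} (hz0 : 0 ≤ z) (hz1 : z < 1) (hq0 : 0 < q) (hq1 : q < 1) :
    HasProd (fun k : ℕ => 1 - z * q ^ k) (qpInf z q) := by
  have hfac := factor_pos hz0 hz1 hq0 hq1
  have hle1 : ∀ k : ℕ, 1 - z * q ^ k ≤ 1 := by
    intro k
    have : 0 ≤ z * q ^ k := mul_nonneg hz0 (pow_pos hq0 k).le
    linarith
  have hant : Antitone (fun s : Finset ℕ => ∏ k ∈ s, (1 - z * q ^ k)) := by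
    intro s t hst
    dsimp only
    rw [← Finset.prod_sdiff (f := fun k : ℕ => 1 - z * q ^ k) hst]
    have h1 : ∏ k ∈ t \ s, (1 - z * q ^ k) ≤ 1 :=
      Finset.prod_le_one (fun k _ => (hfac k).le) (fun k _ => hle1 k)
    have h2 : 0 ≤ ∏ k ∈ s, (1 - z * q ^ k) :=
      Finset.prod_nonneg fun k _ => (hfac k).le
    nlinarith [Finset.prod_nonneg (f := fun k : ℕ => 1 - z * q ^ k)
      (s := t \ s) (fun k _ => (hfac k).le)]
  have hbdd : BddBelow (Set.range (fun s : Finset ℕ => ∏ k ∈ s, (1 - z * q ^ k))) := by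
    refine ⟨0, ?_⟩
    rintro x ⟨s, rfl⟩
    exact Finset.prod_nonneg fun k _ => (hfac k).le
  have hP : HasProd (fun k : ℕ => 1 - z * q ^ k)
      (⨅ s : Finset ℕ, ∏ k ∈ s, (1 - z * q ^ k)) :=
    tendsto_atTop_ciInf hant hbdd
  have : Multipliable (fun k : ℕ => 1 - z * q ^ k) := ⟨_, hP⟩
  exact this.hasProd

lemma tendsto_qp {z q : ℝ} (hz0 : 0 ≤ z) (hz1 : z < 1) (hq0 : 0 < q) (hq1 : q < 1) :
    Tendsto (fun n => qp z q n) atTop (𝓝 (qpInf z q)) :=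
  (hasProd_qp hz0 hz1 hq0 hq1).tendsto_prod_nat

lemma qp_lower {z q : ℝ} (hz0 : 0 ≤ z) (hz1 : z < 1) (hq0 : 0 < q) (hq1 : q < 1)
    (n : ℕ) : Real.exp (-(z / ((1 - z) * (1 - q)))) ≤ qp z q n := by
  have hz' : 0 < 1 - z := by linarith
  have hq' : 0 < 1 - q := by linarith
  have key : ∀ k : ℕ, Real.exp (-(z * q ^ k / (1 - z))) ≤ 1 - z * q ^ k := by
    intro k
    set x := z * q ^ k with hx
    have hx0 : 0 ≤ x := mul_nonneg hz0 (pow_pos hq0 k).le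
    have hxz : x ≤ z := by
      have : q ^ k ≤ 1 := pow_le_one₀ hq0.le hq1.le
      nlinarith
    have hx1 : 0 < 1 - x := factor_pos hz0 hz1 hq0 hq1 k
    have h1 : (1 - x)⁻¹ ≤ Real.exp (x / (1 - z)) := by
      have h2 : 1 + x / (1 - z) ≤ Real.exp (x / (1 - z)) := by
        have := Real.add_one_le_exp (x / (1 - z))
        linarith
      have h3 : (1 - x)⁻¹ ≤ 1 + x / (1 - z) := by
        rw [inv_le_iff_one_le_mul₀ hx1]
        have : 0 ≤ x * (z - x) := mul_nonneg hx0 (by linarith)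
        have e : (1 + x / (1 - z)) * (1 - x) = 1 + (x * (z - x)) / (1 - z) := by
          field_simp; ring
        rw [e]
        have : 0 ≤ x * (z - x) / (1 - z) := div_nonneg ‹0 ≤ x * (z - x)› hz'.le
        linarith
      linarith
    have hE := Real.exp_pos (x / (1 - z))
    have h5 : 1 ≤ Real.exp (x / (1 - z)) * (1 - x) := by
      calc (1:ℝ) = (1 - x)⁻¹ * (1 - x) := (inv_mul_cancel₀ hx1.ne').symm
        _ ≤ Real.exp (x / (1 - z)) * (1 - x) := mul_le_mul_of_nonneg_right h1 hx1.le
    rw [Real.exp_neg]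
    calc (Real.exp (x / (1 - z)))⁻¹ = (Real.exp (x / (1 - z)))⁻¹ * 1 := (mul_one _).symm
      _ ≤ (Real.exp (x / (1 - z)))⁻¹ * (Real.exp (x / (1 - z)) * (1 - x)) :=
          mul_le_mul_of_nonneg_left h5 (inv_pos.2 hE).le
      _ = 1 - x := by field_simp
  calc Real.exp (-(z / ((1 - z) * (1 - q))))
      ≤ Real.exp (∑ k ∈ range n, -(z * q ^ k / (1 - z))) := by
        apply Real.exp_le_exp.2
        have hsum : ∑ k ∈ range n, -(z * q ^ k / (1 - z))
            = -(z / (1 - z) * ∑ k ∈ range n, q ^ k) := by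
          rw [Finset.mul_sum, ← Finset.sum_neg_distrib]
          congr 1; ext k; ring
        rw [hsum, neg_le_neg_iff]
        have hgeo : ∑ k ∈ range n, q ^ k ≤ (1 - q)⁻¹ := by
          have := Summable.sum_le_tsum (Finset.range n)
            (fun k _ => (pow_pos hq0 k).le) (summable_geometric_of_lt_one hq0.le hq1)
          rwa [tsum_geometric_of_lt_one hq0.le hq1] at this
        have h0 : 0 ≤ z / (1 - z) := div_nonneg hz0 hz'.le
        calc z / (1 - z) * ∑ k ∈ range n, q ^ k ≤ z / (1 - z) * (1 - q)⁻¹ :=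
              mul_le_mul_of_nonneg_left hgeo h0
          _ = z / ((1 - z) * (1 - q)) := by field_simp
    _ = ∏ k ∈ range n, Real.exp (-(z * q ^ k / (1 - z))) := by
        rw [← Real.exp_sum]
    _ ≤ qp z q n := Finset.prod_le_prod (fun k _ => (Real.exp_pos _).le)
        (fun k _ => key k)

lemma qpInf_pos {z q : ℝ} (hz0 : 0 ≤ z) (hz1 : z < 1) (hq0 : 0 < q) (hq1 : q < 1) :
    0 < qpInf z q := by
  have h := ge_of_tendsto' (tendsto_qp hz0 hz1 hq0 hq1) (qp_lower hz0 hz1 hq0 hq1)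
  exact lt_of_lt_of_le (Real.exp_pos _) h

theorem stmt_17 (p q : ℝ) (hp0 : 0 ≤ p) (hp1 : p < 1) (hq0 : 0 < q) (hq1 : q < 1) :
    Summable (fun n : ℕ => qp (p * q) q n / qp (q ^ 2) q n * q ^ n) ∧
    (q * (1 - p) / (1 - p * q)) +
        (1 - q * (1 - p) / (1 - p * q)) /
          (∑' n : ℕ, qp (p * q) q n / qp (q ^ 2) q n * q ^ n)
      = q * qpInf p q / ((1 - p * q) * (qpInf (p * q) q - qpInf q q)) ∧
    (∑' n : ℕ, qp (p * q) q n / qp (q ^ 2) q n * q ^ n)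
      = (1 - q * (1 - p) / (1 - p * q)) /
          (q * qpInf p q / ((1 - p * q) * (qpInf (p * q) q - qpInf q q)) -
            q * (1 - p) / (1 - p * q)) := by
  have ha0 : 0 ≤ p * q := mul_nonneg hp0 hq0.le
  have ha1 : p * q < 1 := by nlinarith
  have haq : p * q < q := by nlinarith
  have hq2_1 : q ^ 2 < 1 := by nlinarith
  have hq2_0 : (0:ℝ) ≤ q ^ 2 := sq_nonneg q
  have haq0 : 0 ≤ p * q * q := by positivity
  have haq1 : p * q * q < 1 := by nlinarith
  set f : ℕ → ℝ := fun n => qp (p * q) q n / qp (q ^ 2) q n * q ^ n with hfdef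
  set b : ℕ → ℝ := fun n => qp (p * q) q n / qp q q n with hbdef
  have hQpos : ∀ n, 0 < qp q q n := qp_pos hq0.le hq1 hq0 hq1
  have hApos : ∀ n, 0 < qp (p * q) q n := qp_pos ha0 ha1 hq0 hq1
  have hq2pos : ∀ n, 0 < qp (q ^ 2) q n := qp_pos hq2_0 hq2_1 hq0 hq1
  have h1q : (0:ℝ) < 1 - q := by linarith
  have hqa : (0:ℝ) < q - p * q := by linarith
  -- shift identity
  have hshift : ∀ n, qp q q (n + 1) = (1 - q) * qp (q ^ 2) q n := by
    intro n
    show (∏ k ∈ Finset.range (n + 1), (1 - q * q ^ k)) = _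
    rw [Finset.prod_range_succ']
    rw [mul_comm]
    congr 1
    · norm_num
    · apply Finset.prod_congr rfl
      intro k _
      ring
  -- telescoping
  have htel : ∀ n, f n = (b (n + 1) - b n) * ((1 - q) / (q - p * q)) := by
    intro n
    have e1 : qp (p * q) q (n + 1) = qp (p * q) q n * (1 - p * q * q ^ n) :=
      Finset.prod_range_succ _ _
    have e2 : qp q q (n + 1) = qp q q n * (1 - q * q ^ n) := Finset.prod_range_succ _ _
    have e3 := hshift n
    have e4 : qp (q ^ 2) q n = qp q q n * (1 - q * q ^ n) / (1 - q) := by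
      rw [← e2, e3]; field_simp
    have hfac : 0 < 1 - q * q ^ n := factor_pos hq0.le hq1 hq0 hq1 n
    simp only [hfdef, hbdef]
    rw [e1, e2, e4]
    have n1 : qp q q n ≠ 0 := (hQpos n).ne'
    have n2 : (1 - q * q ^ n) ≠ 0 := hfac.ne'
    have n3 : (1 - q) ≠ 0 := h1q.ne'
    have n4 : q ≠ 0 := hq0.ne'
    have n5 : 1 - p ≠ 0 := by linarith
    field_simp
    ring
  -- partial sums
  have hps : ∀ N, ∑ n ∈ Finset.range N, f n = (b N - 1) * ((1 - q) / (q - p * q)) := by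
    intro N
    have : ∑ n ∈ Finset.range N, f n
        = (∑ n ∈ Finset.range N, (b (n + 1) - b n)) * ((1 - q) / (q - p * q)) := by
      rw [Finset.sum_mul]
      exact Finset.sum_congr rfl fun n _ => htel n
    rw [this, Finset.sum_range_sub b]
    have hb0 : b 0 = 1 := by simp [hbdef, qp]
    rw [hb0]
  -- limits
  have hQinf := qpInf_pos hq0.le hq1 hq0 hq1
  have hAinf := qpInf_pos ha0 ha1 hq0 hq1
  have hbt : Filter.Tendsto b Filter.atTop (𝓝 (qpInf (p * q) q / qpInf q q)) :=
    (tendsto_qp ha0 ha1 hq0 hq1).div (tendsto_qp hq0.le hq1 hq0 hq1) hQinf.ne'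
  set L : ℝ := qpInf (p * q) q / qpInf q q with hLdef
  have hSt : Filter.Tendsto (fun N => ∑ n ∈ Finset.range N, f n) Filter.atTop
      (𝓝 ((L - 1) * ((1 - q) / (q - p * q)))) := by
    simp only [hps]
    exact (hbt.sub tendsto_const_nhds).mul tendsto_const_nhds
  have hf0 : ∀ n, 0 ≤ f n := by
    intro n
    have := hApos n; have := hq2pos n; have := pow_pos hq0 n
    positivity
  have hmono : Monotone fun N => ∑ n ∈ Finset.range N, f n := by
    apply monotone_nat_of_le_succ
    intro N
    rw [Finset.sum_range_succ]
    linarith [hf0 N]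
  have hsum : Summable f :=
    summable_of_sum_range_le hf0 fun N => hmono.ge_of_tendsto hSt N
  have htsum : ∑' n, f n = (L - 1) * ((1 - q) / (q - p * q)) :=
    tendsto_nhds_unique hsum.hasSum.tendsto_sum_nat hSt
  -- (p;q)∞ = (1-p)(pq;q)∞
  have hPshift : qpInf p q = (1 - p) * qpInf (p * q) q := by
    have h1 : Filter.Tendsto (fun N => qp p q (N + 1)) Filter.atTop (𝓝 (qpInf p q)) :=
      (tendsto_qp hp0 hp1 hq0 hq1).comp (Filter.tendsto_add_atTop_nat 1)
    have h2 : ∀ N : ℕ, qp p q (N + 1) = (1 - p) * qp (p * q) q N := by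
      intro N
      show (∏ k ∈ Finset.range (N + 1), (1 - p * q ^ k)) = _
      rw [Finset.prod_range_succ', mul_comm]
      congr 1
      · norm_num
      · apply Finset.prod_congr rfl
        intro k _
        ring
    simp only [h2] at h1
    exact tendsto_nhds_unique h1 ((tendsto_qp ha0 ha1 hq0 hq1).const_mul (1 - p))
  -- (pq;q)∞ > (q;q)∞
  have hAQ : qpInf q q < qpInf (p * q) q := by
    have hineq : ∀ N : ℕ, (1 - p * q) * qp q q (N + 1) ≤ (1 - q) * qp (p * q) q (N + 1) := by
      intro N
      have ea : qp (p * q) q (N + 1) = (1 - p * q) * qp (p * q * q) q N := by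
        show (∏ k ∈ Finset.range (N + 1), (1 - p * q * q ^ k)) = _
        rw [Finset.prod_range_succ', mul_comm]
        congr 1
        · norm_num
        · apply Finset.prod_congr rfl
          intro k _
          ring
      rw [hshift N, ea]
      have hle : qp (q ^ 2) q N ≤ qp (p * q * q) q N := by
        apply Finset.prod_le_prod
        · intro k _; exact (factor_pos hq2_0 hq2_1 hq0 hq1 k).le
        · intro k _
          have hk : 0 < q ^ k := pow_pos hq0 k
          have h7 : p * (q ^ 2 * q ^ k) ≤ 1 * (q ^ 2 * q ^ k) :=
            mul_le_mul_of_nonneg_right hp1.le (by positivity)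
          nlinarith
      have h6 : (0:ℝ) ≤ (1 - q) * (1 - p * q) := by nlinarith
      calc (1 - p * q) * ((1 - q) * qp (q ^ 2) q N)
          = (1 - q) * (1 - p * q) * qp (q ^ 2) q N := by ring
        _ ≤ (1 - q) * (1 - p * q) * qp (p * q * q) q N := by
            exact mul_le_mul_of_nonneg_left hle h6
        _ = (1 - q) * ((1 - p * q) * qp (p * q * q) q N) := by ring
    have hlim : (1 - p * q) * qpInf q q ≤ (1 - q) * qpInf (p * q) q := by
      have t1 : Filter.Tendsto (fun N => (1 - p * q) * qp q q (N + 1)) Filter.atTop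
          (𝓝 ((1 - p * q) * qpInf q q)) :=
        (((tendsto_qp hq0.le hq1 hq0 hq1).comp (Filter.tendsto_add_atTop_nat 1)).const_mul _)
      have t2 : Filter.Tendsto (fun N => (1 - q) * qp (p * q) q (N + 1)) Filter.atTop
          (𝓝 ((1 - q) * qpInf (p * q) q)) :=
        (((tendsto_qp ha0 ha1 hq0 hq1).comp (Filter.tendsto_add_atTop_nat 1)).const_mul _)
      exact le_of_tendsto_of_tendsto' t1 t2 hineq
    nlinarith
  have h1 : qpInf q q ≠ 0 := hQinf.ne'
  have hAQ' : (0:ℝ) < qpInf (p * q) q - qpInf q q := by linarith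
  have h2 : qpInf (p * q) q - qpInf q q ≠ 0 := hAQ'.ne'
  have h3 : (1:ℝ) - p * q ≠ 0 := by nlinarith
  have h4 : q - p * q ≠ 0 := hqa.ne'
  have h5 : (1:ℝ) - q ≠ 0 := h1q.ne'
  have h1p : (0:ℝ) < 1 - p := by linarith
  have h3' : (0:ℝ) < 1 - p * q := by nlinarith
  refine ⟨hsum, ?_, ?_⟩
  · rw [htsum, hPshift, hLdef]
    have := hq0.ne'; have := h1p.ne'
    have : 1 - q * p ≠ 0 := by rw [mul_comm]; exact h3
    have : qpInf (q * p) q - qpInf q q ≠ 0 := by rw [mul_comm]; exact h2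
    have : -qpInf q q + qpInf (q * p) q ≠ 0 := by rw [mul_comm, neg_add_eq_sub]; exact h2
    field_simp
    ring
  · rw [htsum, hPshift, hLdef]
    have hMh : q * ((1 - p) * qpInf (p * q) q) / ((1 - p * q) * (qpInf (p * q) q - qpInf q q))
        - q * (1 - p) / (1 - p * q)
        = q * (1 - p) * qpInf q q / ((1 - p * q) * (qpInf (p * q) q - qpInf q q)) := by
      have := hq0.ne'; have := h1p.ne'
      have : 1 - q * p ≠ 0 := by rw [mul_comm]; exact h3
      have : qpInf (q * p) q - qpInf q q ≠ 0 := by rw [mul_comm]; exact h2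
      field_simp
      ring
    rw [hMh]
    have hpos : (0:ℝ) < q * (1 - p) * qpInf q q / ((1 - p * q) * (qpInf (p * q) q - qpInf q q)) :=
      div_pos (by positivity) (mul_pos h3' hAQ')
    rw [eq_div_iff hpos.ne']
    field_simp
    ring
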